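/- Given staircase data, let {f₀,…,f_r} = A ⊔ B be a partition of the staircase generators with B nonempty and with both f₀ ∈ A and f_r ∈ A (a point splitting: A contains the product of all the vertical forms and the product of all the horizontal forms). Then μ(Ideal.span A ⊓ Ideal.span B) ≥ 2, where μ(I) = dim_ℂ (I / mI) with m = ⟨x₀,x₁,y₀,y₁⟩. In particular no point splitting is a Betti splitting. -/

import Mathlib

/- Common setup: R = ℂ[x₀,x₁,y₀,y₁] as MvPolynomial (Fin 4) ℂ with
   x₀ = X 0, x₁ = X 1, y₀ = X 2, y₁ = X 3.
   `Hf a` is the horizontal form a₁x₀ - a₀x₁ of the point a = [a₀:a₁] ∈ ℙ¹;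
   `Vf b` is the vertical form b₁y₀ - b₀y₁;
   `cross a b ≠ 0` says the (nonzero) pairs a, b are non-proportional,
   i.e. define distinct points of ℙ¹. -/

open MvPolynomial

noncomputable section

abbrev R : Type := MvPolynomial (Fin 4) ℂ

def Hf (a : ℂ × ℂ) : R := C a.2 * X 0 - C a.1 * X 1

def Vf (b : ℂ × ℂ) : R := C b.2 * X 2 - C b.1 * X 3

def cross (a b : ℂ × ℂ) : ℂ := a.1 * b.2 - a.2 * b.1

/-- The defining ideal of the point P = A×B of ℙ¹×ℙ¹. -/
def Ipt (P : (ℂ × ℂ) × (ℂ × ℂ)) : Ideal R := Ideal.span {Hf P.1, Vf P.2}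

/-- The defining ideal of a finite set of points (I_∅ = R = ⊤). -/
def Ipts (X : Finset ((ℂ × ℂ) × (ℂ × ℂ))) : Ideal R := X.inf Ipt

/-- The defining ideal of a set of points (I_∅ = R = ⊤). -/
def IptsSet (W : Set ((ℂ × ℂ) × (ℂ × ℂ))) : Ideal R := ⨅ P ∈ W, Ipt P

/-- Bihomogeneous: homogeneous separately in x₀,x₁ and in y₀,y₁. -/
def Bihom (f : R) : Prop :=
  ∃ a b : ℕ, IsWeightedHomogeneous (![1,1,0,0] : Fin 4 → ℕ) f a ∧
    IsWeightedHomogeneous (![0,0,1,1] : Fin 4 → ℕ) f b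

/-- `G` minimally generates `I`. -/
def MinGen (G : Finset R) (I : Ideal R) : Prop :=
  Ideal.span (G : Set R) = I ∧ ∀ g ∈ G, Ideal.span ((G : Set R) \ {g}) ≠ I

/-- Staircase data: r ≥ 1, 0 = t₀ < t₁ < ⋯ < t_r, 0 = s₀ < s₁ < ⋯ < s_r,
    pairwise distinct points A₁,…,A_{t_r} of ℙ¹ and pairwise distinct points
    B₁,…,B_{s_r} of ℙ¹ (all indexed starting at 1). -/
structure Staircase where
  r : ℕ
  t : ℕ → ℕ
  s : ℕ → ℕ
  A : ℕ → ℂ × ℂ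
  B : ℕ → ℂ × ℂ
  hr : 1 ≤ r
  ht0 : t 0 = 0
  hs0 : s 0 = 0
  ht : ∀ k, k < r → t k < t (k + 1)
  hs : ∀ k, k < r → s k < s (k + 1)
  hA0 : ∀ i ∈ Finset.Icc 1 (t r), A i ≠ 0
  hB0 : ∀ j ∈ Finset.Icc 1 (s r), B j ≠ 0
  hAd : ∀ i ∈ Finset.Icc 1 (t r), ∀ i' ∈ Finset.Icc 1 (t r), i ≠ i' → cross (A i) (A i') ≠ 0
  hBd : ∀ j ∈ Finset.Icc 1 (s r), ∀ j' ∈ Finset.Icc 1 (s r), j ≠ j' → cross (B j) (B j') ≠ 0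

/-- The staircase generator f_k = H₁⋯H_{t_k} · V₁⋯V_{s_{r-k}}. -/
def stairGen (S : Staircase) (k : ℕ) : R :=
  (∏ i ∈ Finset.Icc 1 (S.t k), Hf (S.A i)) * ∏ j ∈ Finset.Icc 1 (S.s (S.r - k)), Vf (S.B j)

/-- μ(I): the minimal number of generators of the ideal I. -/
def mu (I : Ideal R) : ℕ := sInf {n | ∃ G : Finset R, G.card = n ∧ Ideal.span (G : Set R) = I}

namespace Helper

/-- Component of `c * f` when `f` is weighted homogeneous of degree `d`. -/
lemma comp_mul_homog {w : Fin 4 → ℕ} {f : R} {d : ℕ}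
    (hf : IsWeightedHomogeneous w f d) (c : R) (n : ℕ) :
    weightedHomogeneousComponent w n (c * f) =
      if d ≤ n then weightedHomogeneousComponent w (n - d) c * f else 0 := by
  classical
  ext μ
  rw [coeff_weightedHomogeneousComponent]
  by_cases hdn : d ≤ n
  · rw [if_pos hdn, coeff_mul, coeff_mul]
    by_cases hw : (Finsupp.weight w) μ = n
    · rw [if_pos hw]
      refine Finset.sum_congr rfl fun x hx => ?_
      by_cases hf2 : coeff x.2 f = 0
      · rw [hf2, mul_zero, mul_zero]
      · have hw2 : (Finsupp.weight w) x.2 = d := hf hf2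
        have hadd : (Finsupp.weight w) x.1 + (Finsupp.weight w) x.2 = (Finsupp.weight w) μ := by
          rw [← map_add]; rw [Finset.HasAntidiagonal.mem_antidiagonal.mp hx]
        have : (Finsupp.weight w) x.1 = n - d := by omega
        rw [coeff_weightedHomogeneousComponent, if_pos this]
    · rw [if_neg hw]
      refine (Finset.sum_eq_zero fun x hx => ?_).symm
      by_cases hf2 : coeff x.2 f = 0
      · rw [hf2, mul_zero]
      · have hw2 : (Finsupp.weight w) x.2 = d := hf hf2
        have hadd : (Finsupp.weight w) x.1 + (Finsupp.weight w) x.2 = (Finsupp.weight w) μ := by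
          rw [← map_add]; rw [Finset.HasAntidiagonal.mem_antidiagonal.mp hx]
        rw [coeff_weightedHomogeneousComponent, if_neg (by omega), zero_mul]
  · rw [if_neg hdn, coeff_zero]
    by_cases hw : (Finsupp.weight w) μ = n
    · rw [if_pos hw, coeff_mul]
      refine Finset.sum_eq_zero fun x hx => ?_
      by_cases hf2 : coeff x.2 f = 0
      · rw [hf2, mul_zero]
      · have hw2 : (Finsupp.weight w) x.2 = d := hf hf2
        have hadd : (Finsupp.weight w) x.1 + (Finsupp.weight w) x.2 = (Finsupp.weight w) μ := by
          rw [← map_add]; rw [Finset.HasAntidiagonal.mem_antidiagonal.mp hx]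
        omega
    · rw [if_neg hw]

/-- The top weighted component of a product is the product of top components. -/
lemma comp_top_mul (w : Fin 4 → ℕ) (p q : R) :
    weightedHomogeneousComponent w (weightedTotalDegree w p + weightedTotalDegree w q) (p * q) =
      weightedHomogeneousComponent w (weightedTotalDegree w p) p *
        weightedHomogeneousComponent w (weightedTotalDegree w q) q := by
  classical
  set dp := weightedTotalDegree w p
  set dq := weightedTotalDegree w q
  ext μ
  rw [coeff_weightedHomogeneousComponent, coeff_mul, coeff_mul]
  by_cases hw : (Finsupp.weight w) μ = dp + dq
  · rw [if_pos hw]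
    refine Finset.sum_congr rfl fun x hx => ?_
    rw [coeff_weightedHomogeneousComponent, coeff_weightedHomogeneousComponent]
    by_cases hp1 : coeff x.1 p = 0
    · simp [hp1]
    by_cases hq2 : coeff x.2 q = 0
    · simp [hq2]
    have h1 : (Finsupp.weight w) x.1 ≤ dp :=
      le_weightedTotalDegree w (Finsupp.mem_support_iff.mpr hp1)
    have h2 : (Finsupp.weight w) x.2 ≤ dq :=
      le_weightedTotalDegree w (Finsupp.mem_support_iff.mpr hq2)
    have hadd : (Finsupp.weight w) x.1 + (Finsupp.weight w) x.2 = (Finsupp.weight w) μ := by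
      rw [← map_add]; rw [Finset.HasAntidiagonal.mem_antidiagonal.mp hx]
    rw [if_pos (by omega), if_pos (by omega)]
  · rw [if_neg hw]
    refine (Finset.sum_eq_zero fun x hx => ?_).symm
    rw [coeff_weightedHomogeneousComponent, coeff_weightedHomogeneousComponent]
    by_cases h1 : (Finsupp.weight w) x.1 = dp
    · by_cases h2 : (Finsupp.weight w) x.2 = dq
      · exfalso
        have hadd : (Finsupp.weight w) x.1 + (Finsupp.weight w) x.2 = (Finsupp.weight w) μ := by
          rw [← map_add]; rw [Finset.HasAntidiagonal.mem_antidiagonal.mp hx]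
        omega
      · rw [if_neg h2, mul_zero]
    · rw [if_neg h1, zero_mul]

lemma comp_top_ne_zero (w : Fin 4 → ℕ) {p : R} (hp : p ≠ 0) :
    weightedHomogeneousComponent w (weightedTotalDegree w p) p ≠ 0 := by
  classical
  obtain ⟨μ, hμ, hsup⟩ := Finset.exists_mem_eq_sup p.support
    (by rwa [Finset.nonempty_iff_ne_empty, Ne, MvPolynomial.support_eq_empty])
    (fun s => (Finsupp.weight w) s)
  intro h
  have := congrArg (coeff μ) h
  rw [coeff_weightedHomogeneousComponent, coeff_zero] at this
  rw [if_pos] at this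
  · exact Finsupp.mem_support_iff.mp hμ this
  · exact hsup.symm

/-- a divisor of a nonzero weighted-homogeneous polynomial has weighted total degree ≤ n. -/
lemma wtd_le_of_dvd {w : Fin 4 → ℕ} {u g : R} (hdvd : g ∣ u) (hu : u ≠ 0) {n : ℕ}
    (hhom : IsWeightedHomogeneous w u n) : weightedTotalDegree w g ≤ n := by
  obtain ⟨a, rfl⟩ := hdvd
  have hg : g ≠ 0 := left_ne_zero_of_mul hu
  have ha : a ≠ 0 := right_ne_zero_of_mul hu
  have htop : weightedHomogeneousComponent w
      (weightedTotalDegree w g + weightedTotalDegree w a) (g * a) ≠ 0 := by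
    rw [comp_top_mul]
    exact mul_ne_zero (comp_top_ne_zero w hg) (comp_top_ne_zero w ha)
  by_contra hlt
  have : weightedTotalDegree w g + weightedTotalDegree w a ≠ n := by omega
  exact htop (hhom.weightedHomogeneousComponent_ne _ this)


lemma Hf_homogX (a : ℂ × ℂ) : IsWeightedHomogeneous ![1,1,0,0] (Hf a) 1 := by
  have h0 : IsWeightedHomogeneous (![1,1,0,0] : Fin 4 → ℕ) (X 0 : R) 1 := by
    simpa using isWeightedHomogeneous_X ℂ ![1,1,0,0] 0
  have h1 : IsWeightedHomogeneous (![1,1,0,0] : Fin 4 → ℕ) (X 1 : R) 1 := by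
    simpa using isWeightedHomogeneous_X ℂ ![1,1,0,0] 1
  have : Hf a ∈ weightedHomogeneousSubmodule ℂ ![1,1,0,0] 1 := by
    apply sub_mem <;> rw [C_mul']
    · exact Submodule.smul_mem _ _ h0
    · exact Submodule.smul_mem _ _ h1
  exact this

lemma Hf_homogY (a : ℂ × ℂ) : IsWeightedHomogeneous ![0,0,1,1] (Hf a) 0 := by
  have h0 : IsWeightedHomogeneous (![0,0,1,1] : Fin 4 → ℕ) (X 0 : R) 0 := by
    simpa using isWeightedHomogeneous_X ℂ ![0,0,1,1] 0
  have h1 : IsWeightedHomogeneous (![0,0,1,1] : Fin 4 → ℕ) (X 1 : R) 0 := by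
    simpa using isWeightedHomogeneous_X ℂ ![0,0,1,1] 1
  have : Hf a ∈ weightedHomogeneousSubmodule ℂ ![0,0,1,1] 0 := by
    apply sub_mem <;> rw [C_mul']
    · exact Submodule.smul_mem _ _ h0
    · exact Submodule.smul_mem _ _ h1
  exact this

lemma Vf_homogX (a : ℂ × ℂ) : IsWeightedHomogeneous ![1,1,0,0] (Vf a) 0 := by
  have h0 : IsWeightedHomogeneous (![1,1,0,0] : Fin 4 → ℕ) (X 2 : R) 0 := by
    simpa using isWeightedHomogeneous_X ℂ ![1,1,0,0] 2
  have h1 : IsWeightedHomogeneous (![1,1,0,0] : Fin 4 → ℕ) (X 3 : R) 0 := by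
    simpa using isWeightedHomogeneous_X ℂ ![1,1,0,0] 3
  have : Vf a ∈ weightedHomogeneousSubmodule ℂ ![1,1,0,0] 0 := by
    apply sub_mem <;> rw [C_mul']
    · exact Submodule.smul_mem _ _ h0
    · exact Submodule.smul_mem _ _ h1
  exact this

lemma Vf_homogY (a : ℂ × ℂ) : IsWeightedHomogeneous ![0,0,1,1] (Vf a) 1 := by
  have h0 : IsWeightedHomogeneous (![0,0,1,1] : Fin 4 → ℕ) (X 2 : R) 1 := by
    simpa using isWeightedHomogeneous_X ℂ ![0,0,1,1] 2
  have h1 : IsWeightedHomogeneous (![0,0,1,1] : Fin 4 → ℕ) (X 3 : R) 1 := by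
    simpa using isWeightedHomogeneous_X ℂ ![0,0,1,1] 3
  have : Vf a ∈ weightedHomogeneousSubmodule ℂ ![0,0,1,1] 1 := by
    apply sub_mem <;> rw [C_mul']
    · exact Submodule.smul_mem _ _ h0
    · exact Submodule.smul_mem _ _ h1
  exact this

lemma prod_homog {w : Fin 4 → ℕ} {c : ℕ} (F : ℕ → R) (m : ℕ)
    (h : ∀ i ∈ Finset.Ioc 0 m, IsWeightedHomogeneous w (F i) c) :
    IsWeightedHomogeneous w (∏ i ∈ Finset.Ioc 0 m, F i) (c * m) := by
  have := IsWeightedHomogeneous.prod (Finset.Ioc 0 m) F (fun _ => c) h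
  simpa [Nat.card_Ioc, mul_comm] using this

lemma Hf_ne_zero {a : ℂ × ℂ} (ha : a ≠ 0) : Hf a ≠ 0 := by
  intro h
  apply ha
  have h1 := congrArg (eval (fun i : Fin 4 => if i = 0 then (1:ℂ) else 0)) h
  have h2 := congrArg (eval (fun i : Fin 4 => if i = 1 then (1:ℂ) else 0)) h
  simp [Hf] at h1 h2
  exact Prod.ext h2 h1

lemma Vf_ne_zero {a : ℂ × ℂ} (ha : a ≠ 0) : Vf a ≠ 0 := by
  intro h
  apply ha
  have h1 := congrArg (eval (fun i : Fin 4 => if i = 2 then (1:ℂ) else 0)) h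
  have h2 := congrArg (eval (fun i : Fin 4 => if i = 3 then (1:ℂ) else 0)) h
  simp [Vf] at h1 h2
  exact Prod.ext h2 h1

/-- strict monotonicity on an initial segment -/
lemma strictMonoSeg {t : ℕ → ℕ} {r : ℕ} (ht : ∀ k, k < r → t k < t (k + 1)) :
    ∀ j, j ≤ r → ∀ i, i < j → t i < t j := by
  intro j
  induction j with
  | zero => omega
  | succ n ih =>
    intro hj i hi
    rcases Nat.lt_or_ge i n with h | h
    · exact lt_trans (ih (by omega) i h) (ht n (by omega))
    · have : i = n := by omega
      subst this
      exact ht i (by omega)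


end Helper

/-- Corollary 5.9: for a point splitting, i.e. a partition {f₀,…,f_r} = A ⊔ B of the
staircase generators with f₀ ∈ A, f_r ∈ A and B nonempty (encoded by index sets
KA ⊔ KB = {0,…,r} with 0, r ∈ KA), the intersection needs at least two generators:
μ(span A ⊓ span B) ≥ 2.  In particular no point splitting is a Betti splitting. -/

theorem statement12 (S : Staircase) (KA KB : Finset ℕ)
    (hUnion : KA ∪ KB = Finset.Iic S.r) (hDisj : Disjoint KA KB)
    (h0 : 0 ∈ KA) (hr : S.r ∈ KA) (hBne : KB.Nonempty) :
    2 ≤ mu (Ideal.span (stairGen S '' ↑KA) ⊓ Ideal.span (stairGen S '' ↑KB)) := by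
  classical
  obtain ⟨k, hk⟩ := hBne
  have hkr : k ≤ S.r := by
    have h : k ∈ KA ∪ KB := Finset.mem_union_right _ hk
    rw [hUnion] at h
    exact Finset.mem_Iic.mp h
  have hk0 : k ≠ 0 := fun h => Finset.disjoint_left.mp hDisj h0 (h ▸ hk)
  have hkrne : k ≠ S.r := fun h => Finset.disjoint_left.mp hDisj hr (h ▸ hk)
  have tmono := Helper.strictMonoSeg S.ht
  have smono := Helper.strictMonoSeg S.hs
  have tle : S.t k ≤ S.t S.r := le_of_lt (tmono S.r le_rfl k (by omega))
  have sle : S.s (S.r - k) ≤ S.s S.r := le_of_lt (smono S.r le_rfl (S.r - k) (by omega))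
  have hIcc : ∀ n : ℕ, Finset.Icc 1 n = Finset.Ioc 0 n := fun n => by
    rw [← Finset.Icc_add_one_left_eq_Ioc, zero_add]
  -- reformulated generators
  have hgen : ∀ j, stairGen S j =
      (∏ i ∈ Finset.Ioc 0 (S.t j), Hf (S.A i)) *
        ∏ i ∈ Finset.Ioc 0 (S.s (S.r - j)), Vf (S.B i) := fun j => by
    rw [stairGen, hIcc, hIcc]
  have hgen0 : stairGen S 0 = ∏ i ∈ Finset.Ioc 0 (S.s S.r), Vf (S.B i) := by
    rw [hgen, S.ht0]
    simp
  have hgenr : stairGen S S.r = ∏ i ∈ Finset.Ioc 0 (S.t S.r), Hf (S.A i) := by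
    rw [hgen, Nat.sub_self, S.hs0]
    simp
  -- the two intersection elements
  set u : R := (∏ i ∈ Finset.Ioc 0 (S.t k), Hf (S.A i)) *
      ∏ i ∈ Finset.Ioc 0 (S.s S.r), Vf (S.B i) with hu_def
  set w' : R := (∏ i ∈ Finset.Ioc 0 (S.t S.r), Hf (S.A i)) *
      ∏ i ∈ Finset.Ioc 0 (S.s (S.r - k)), Vf (S.B i) with hw_def
  have hsplitV : (∏ i ∈ Finset.Ioc 0 (S.s (S.r - k)), Vf (S.B i)) *
      ∏ i ∈ Finset.Ioc (S.s (S.r - k)) (S.s S.r), Vf (S.B i)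
        = ∏ i ∈ Finset.Ioc 0 (S.s S.r), Vf (S.B i) :=
    Finset.prod_Ioc_consecutive _ (Nat.zero_le _) sle
  have hsplitH : (∏ i ∈ Finset.Ioc 0 (S.t k), Hf (S.A i)) *
      ∏ i ∈ Finset.Ioc (S.t k) (S.t S.r), Hf (S.A i)
        = ∏ i ∈ Finset.Ioc 0 (S.t S.r), Hf (S.A i) :=
    Finset.prod_Ioc_consecutive _ (Nat.zero_le _) tle
  -- memberships
  have hmemA0 : stairGen S 0 ∈ Ideal.span (stairGen S '' (↑KA : Set ℕ)) :=
    Ideal.subset_span ⟨0, Finset.mem_coe.mpr h0, rfl⟩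
  have hmemAr : stairGen S S.r ∈ Ideal.span (stairGen S '' (↑KA : Set ℕ)) :=
    Ideal.subset_span ⟨S.r, Finset.mem_coe.mpr hr, rfl⟩
  have hmemBk : stairGen S k ∈ Ideal.span (stairGen S '' (↑KB : Set ℕ)) :=
    Ideal.subset_span ⟨k, Finset.mem_coe.mpr hk, rfl⟩
  have huA : u ∈ Ideal.span (stairGen S '' (↑KA : Set ℕ)) := by
    rw [hu_def, ← hgen0]
    exact Ideal.mul_mem_left _ _ hmemA0
  have huB : u ∈ Ideal.span (stairGen S '' (↑KB : Set ℕ)) := by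
    have : u = stairGen S k * ∏ i ∈ Finset.Ioc (S.s (S.r - k)) (S.s S.r), Vf (S.B i) := by
      rw [hgen, mul_assoc, hsplitV]
    rw [this]
    exact Ideal.mul_mem_right _ _ hmemBk
  have hwA : w' ∈ Ideal.span (stairGen S '' (↑KA : Set ℕ)) := by
    rw [hw_def, ← hgenr]
    exact Ideal.mul_mem_right _ _ hmemAr
  have hwB : w' ∈ Ideal.span (stairGen S '' (↑KB : Set ℕ)) := by
    have : w' = stairGen S k * ∏ i ∈ Finset.Ioc (S.t k) (S.t S.r), Hf (S.A i) := by
      rw [hgen, mul_right_comm, hsplitH]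
    rw [this]
    exact Ideal.mul_mem_right _ _ hmemBk
  -- nonzero
  have hu_ne : u ≠ 0 := by
    apply mul_ne_zero <;> rw [Finset.prod_ne_zero_iff] <;> intro i hi <;>
      rw [Finset.mem_Ioc] at hi
    · exact Helper.Hf_ne_zero (S.hA0 i (Finset.mem_Icc.mpr (by omega)))
    · exact Helper.Vf_ne_zero (S.hB0 i (Finset.mem_Icc.mpr (by omega)))
  have hw_ne : w' ≠ 0 := by
    apply mul_ne_zero <;> rw [Finset.prod_ne_zero_iff] <;> intro i hi <;>
      rw [Finset.mem_Ioc] at hi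
    · exact Helper.Hf_ne_zero (S.hA0 i (Finset.mem_Icc.mpr (by omega)))
    · exact Helper.Vf_ne_zero (S.hB0 i (Finset.mem_Icc.mpr (by omega)))
  -- homogeneity
  have hUX : IsWeightedHomogeneous ![1,1,0,0] u (S.t k) := by
    have h1 := Helper.prod_homog (w := ![1,1,0,0]) (fun i => Hf (S.A i)) (S.t k)
      (fun i _ => Helper.Hf_homogX _)
    have h2 := Helper.prod_homog (w := ![1,1,0,0]) (fun i => Vf (S.B i)) (S.s S.r)
      (fun i _ => Helper.Vf_homogX _)
    simpa using h1.mul h2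
  have hWY : IsWeightedHomogeneous ![0,0,1,1] w' (S.s (S.r - k)) := by
    have h1 := Helper.prod_homog (w := ![0,0,1,1]) (fun i => Hf (S.A i)) (S.t S.r)
      (fun i _ => Helper.Hf_homogY _)
    have h2 := Helper.prod_homog (w := ![0,0,1,1]) (fun i => Vf (S.B i)) (S.s (S.r - k))
      (fun i _ => Helper.Vf_homogY _)
    simpa using h1.mul h2
  have hgenX : ∀ j, IsWeightedHomogeneous ![1,1,0,0] (stairGen S j) (S.t j) := fun j => by
    rw [hgen]
    have h1 := Helper.prod_homog (w := ![1,1,0,0]) (fun i => Hf (S.A i)) (S.t j)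
      (fun i _ => Helper.Hf_homogX _)
    have h2 := Helper.prod_homog (w := ![1,1,0,0]) (fun i => Vf (S.B i)) (S.s (S.r - j))
      (fun i _ => Helper.Vf_homogX _)
    simpa using h1.mul h2
  have hgenY : ∀ j, IsWeightedHomogeneous ![0,0,1,1] (stairGen S j) (S.s (S.r - j)) := fun j => by
    rw [hgen]
    have h1 := Helper.prod_homog (w := ![0,0,1,1]) (fun i => Hf (S.A i)) (S.t j)
      (fun i _ => Helper.Hf_homogY _)
    have h2 := Helper.prod_homog (w := ![0,0,1,1]) (fun i => Vf (S.B i)) (S.s (S.r - j))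
      (fun i _ => Helper.Vf_homogY _)
    simpa using h1.mul h2
  -- main argument
  set J := Ideal.span (stairGen S '' (↑KA : Set ℕ)) ⊓ Ideal.span (stairGen S '' (↑KB : Set ℕ))
    with hJ_def
  have huJ : u ∈ J := Submodule.mem_inf.mpr ⟨huA, huB⟩
  have hwJ : w' ∈ J := Submodule.mem_inf.mpr ⟨hwA, hwB⟩
  by_contra hcon
  push_neg at hcon
  rw [mu] at hcon
  have hSSne : {n | ∃ G : Finset R, G.card = n ∧ Ideal.span (↑G : Set R) = J}.Nonempty := by
    obtain ⟨G, hG⟩ := IsNoetherian.noetherian J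
    exact ⟨G.card, G, rfl, hG⟩
  obtain ⟨G, hGcard, hGspan⟩ := Nat.sInf_mem hSSne
  rw [← hGcard] at hcon
  rcases Nat.le_one_iff_eq_zero_or_eq_one.mp (by omega : G.card ≤ 1) with hc0 | hc1
  · rw [Finset.card_eq_zero.mp hc0] at hGspan
    simp only [Finset.coe_empty, Ideal.span_empty] at hGspan
    rw [← hGspan] at huJ
    exact hu_ne ((Submodule.mem_bot _).mp huJ)
  · obtain ⟨g, rfl⟩ := Finset.card_eq_one.mp hc1
    rw [Finset.coe_singleton] at hGspan
    have hgu : g ∣ u := Ideal.mem_span_singleton.mp (hGspan ▸ huJ)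
    have hgw : g ∣ w' := Ideal.mem_span_singleton.mp (hGspan ▸ hwJ)
    have hg0 : g ≠ 0 := by
      rintro rfl
      exact hu_ne (zero_dvd_iff.mp hgu)
    have hgJ : g ∈ J := hGspan ▸ Ideal.mem_span_singleton.mpr dvd_rfl
    have hdx : weightedTotalDegree ![1,1,0,0] g ≤ S.t k := Helper.wtd_le_of_dvd hgu hu_ne hUX
    have hdy : weightedTotalDegree ![0,0,1,1] g ≤ S.s (S.r - k) :=
      Helper.wtd_le_of_dvd hgw hw_ne hWY
    have hgA : g ∈ Ideal.span (↑(KA.image (stairGen S)) : Set R) := by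
      rw [Finset.coe_image]
      exact (inf_le_left : J ≤ _) hgJ
    obtain ⟨c, -, hc⟩ := Submodule.mem_span_finset.mp hgA
    obtain ⟨μ, hμ⟩ := MvPolynomial.ne_zero_iff.mp hg0
    have haw : (Finsupp.weight ![1,1,0,0]) μ ≤ S.t k :=
      le_trans (le_weightedTotalDegree _ (MvPolynomial.mem_support_iff.mpr hμ)) hdx
    have hbw : (Finsupp.weight ![0,0,1,1]) μ ≤ S.s (S.r - k) :=
      le_trans (le_weightedTotalDegree _ (MvPolynomial.mem_support_iff.mpr hμ)) hdy
    have hzero : weightedHomogeneousComponent ![0,0,1,1] ((Finsupp.weight ![0,0,1,1]) μ)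
        (weightedHomogeneousComponent ![1,1,0,0] ((Finsupp.weight ![1,1,0,0]) μ) g) = 0 := by
      rw [← hc, map_sum, map_sum]
      apply Finset.sum_eq_zero
      intro p hp
      obtain ⟨j, hjKA, rfl⟩ := Finset.mem_image.mp hp
      rw [smul_eq_mul]
      have hjr : j ≤ S.r := by
        have h : j ∈ KA ∪ KB := Finset.mem_union_left _ hjKA
        rw [hUnion] at h
        exact Finset.mem_Iic.mp h
      by_cases hj : S.t j ≤ (Finsupp.weight ![1,1,0,0]) μ
      · have hjk : j ≤ k := by
          by_contra hh
          have := tmono j hjr k (by omega)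
          omega
        have hjk' : j < k := lt_of_le_of_ne hjk
          (fun h => Finset.disjoint_left.mp hDisj hjKA (h ▸ hk))
        have hsj : S.s (S.r - k) < S.s (S.r - j) :=
          smono (S.r - j) (by omega) (S.r - k) (by omega)
        rw [Helper.comp_mul_homog (hgenX j), if_pos hj,
          Helper.comp_mul_homog (hgenY j), if_neg (by omega)]
      · rw [Helper.comp_mul_homog (hgenX j), if_neg hj, map_zero]
    have hne : coeff μ ((0 : R)) ≠ 0 := by
      rw [← hzero, coeff_weightedHomogeneousComponent, if_pos rfl,
        coeff_weightedHomogeneousComponent, if_pos rfl]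
      exact hμ
    exact hne (coeff_zero μ)
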